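/- arXiv:1705.06411 — 3 statements merged into one kernel-verified Lean document; each statement's English description precedes it below -/
import Mathlib

section
/- Red(M) is semi-reduced, i.e., Red(Red(M)) = Red(M): the sum of all reduced submodules of M, viewed as a module, equals the sum of its own reduced submodules. -/
/-- `Red M`: the sum of all reduced submodules of `M`. -/
def redSubmodule (R : Type*) [CommRing R] (M : Type*) [AddCommGroup M]
    [Module R M] : Submodule R M :=
  sSup {N : Submodule R M | ∀ (r : R), ∀ x ∈ N, r ^ 2 • x = 0 → r • x = 0}

/-- `Red(M)` is semi-reduced: the sum of the reduced submodules of the module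
`Red(M)` is all of `Red(M)`. -/
theorem red_is_semiReduced (R : Type*) [CommRing R] (M : Type*) [AddCommGroup M]
    [Module R M] : redSubmodule R (redSubmodule R M) = ⊤ := by
  rw [eq_top_iff]
  rintro ⟨m, hm⟩ -
  have key : ∀ m : M, m ∈ redSubmodule R M →
      ∀ h : m ∈ redSubmodule R M,
        (⟨m, h⟩ : redSubmodule R M) ∈ redSubmodule R (redSubmodule R M) := by
    intro m hm
    have hm' : m ∈ ⨆ N : {N : Submodule R M |
        ∀ (r : R), ∀ x ∈ N, r ^ 2 • x = 0 → r • x = 0}, (N : Submodule R M) := by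
      rw [redSubmodule, sSup_eq_iSup'] at hm; exact hm
    have heq : (⨆ N : {N : Submodule R M |
        ∀ (r : R), ∀ x ∈ N, r ^ 2 • x = 0 → r • x = 0}, (N : Submodule R M))
        = redSubmodule R M := by
      rw [redSubmodule, sSup_eq_iSup']
    refine Submodule.iSup_induction' (motive := fun z _ => ∀ h : z ∈ redSubmodule R M,
      (⟨z, h⟩ : redSubmodule R M) ∈ redSubmodule R (redSubmodule R M)) _ ?_ ?_ ?_ hm'
    · rintro ⟨N, hN⟩ x hx h
      refine le_sSup (α := Submodule R (redSubmodule R M))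
        (a := N.comap (redSubmodule R M).subtype) ?_ hx
      intro r y hy hr2
      have : r ^ 2 • (y : M) = 0 := by
        have := congrArg (Submodule.subtype _) hr2
        simpa using this
      have := hN r y hy this
      ext
      simpa using this
    · intro h
      convert (redSubmodule R (redSubmodule R M)).zero_mem using 1
      rfl
    · intro x y hx' hy' hx hy h
      have hxm : x ∈ redSubmodule R M := heq ▸ hx'
      have hym : y ∈ redSubmodule R M := heq ▸ hy'
      have := (redSubmodule R (redSubmodule R M)).add_mem (hx hxm) (hy hym)
      convert this using 1
      rfl
  exact key m hm hm
end

section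
/- If M is a Noetherian R-module, then any direct sum of Red-M-injective modules is Red-M-injective: if each D_i is Red-M-injective, then ⨁_{i∈I} D_i is Red-M-injective (every R-linear map from any semi-reduced submodule K of M into ⨁ D_i extends to M). -/
/-- A submodule `K` is semi-reduced if it is the sum of its reduced submodules. -/
def IsSemiReduced (R : Type*) [CommRing R] (M : Type*) [AddCommGroup M]
    [Module R M] (K : Submodule R M) : Prop :=
  K = sSup {N : Submodule R M |
        N ≤ K ∧ ∀ (r : R), ∀ x ∈ N, r ^ 2 • x = 0 → r • x = 0}

theorem directSum_redInjective_of_noetherian (R : Type*) [CommRing R]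
    (M : Type*) [AddCommGroup M] [Module R M] [IsNoetherian R M]
    (I : Type*) [DecidableEq I] (D : I → Type*) [∀ i, AddCommGroup (D i)]
    [∀ i, Module R (D i)]
    (hD : ∀ i, ∀ (K : Submodule R M), IsSemiReduced R M K →
      ∀ f : K →ₗ[R] D i, ∃ g : M →ₗ[R] D i, ∀ x : K, g x = f x) :
    ∀ (K : Submodule R M), IsSemiReduced R M K →
      ∀ f : K →ₗ[R] (DirectSum I D),
        ∃ g : M →ₗ[R] (DirectSum I D), ∀ x : K, g x = f x := by
  classical
  intro K hK f
  -- K is a finitely generated module, so as a module over R, ⊤ : Submodule R K is FG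
  have hfg : (⊤ : Submodule R K).FG := by
    have : IsNoetherian R K := inferInstance
    exact IsNoetherian.noetherian _
  obtain ⟨s, hs⟩ := hfg
  set S : Finset I := s.sup (fun x => (f x).support) with hSdef
  have keysupp : ∀ j, j ∉ S → ∀ x : K, (f x) j = 0 := by
    intro j hj x
    have : ((DirectSum.component R I D j) ∘ₗ f) = 0 := by
      apply LinearMap.ext_on hs
      intro y hy
      have hsupp : (f y).support ⊆ S := Finset.le_sup (f := fun x => (f x).support) hy
      simp only [LinearMap.comp_apply, LinearMap.zero_apply, DirectSum.component.lof_self]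
      by_contra h
      exact hj (hsupp (DFinsupp.mem_support_iff.mpr h))
    have := congrArg (fun φ => φ x) this
    exact (by simpa using this : DirectSum.component R I D j (f x) = 0)
  choose g hg using fun i => hD i K hK ((DirectSum.component R I D i) ∘ₗ f)
  refine ⟨∑ i ∈ S, (DirectSum.lof R I D i) ∘ₗ g i, ?_⟩
  intro x
  have lhs : (∑ i ∈ S, (DirectSum.lof R I D i) ∘ₗ g i) x
      = ∑ i ∈ S, DirectSum.lof R I D i (g i x) := by
    simp [LinearMap.sum_apply]
  rw [lhs]
  refine DFinsupp.ext fun j => ?_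
  rw [DFinsupp.finset_sum_apply]
  by_cases hj : j ∈ S
  · have : ∑ i ∈ S, (DirectSum.lof R I D i (g i x)) j = (g j x : D j) := by
      rw [Finset.sum_eq_single j]
      · simp [DirectSum.lof_eq_of, DirectSum.of_apply]
      · intro i hi hij
        simp [DirectSum.lof_eq_of, DirectSum.of_apply, hij]
      · exact fun h => absurd hj h
    rw [this, hg j x]
    rfl
  · have : ∑ i ∈ S, (DirectSum.lof R I D i (g i x)) j = 0 := by
      apply Finset.sum_eq_zero
      intro i hi
      have hij : i ≠ j := fun h => hj (h ▸ hi)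
      simp [DirectSum.lof_eq_of, DirectSum.of_apply, hij]
    rw [this, keysupp j hj x]
end

section
/- Let N be a Red-quasi-injective R-module (every R-linear map Red(N) → N extends to N, and more generally every map from a semi-reduced submodule of N into N extends to N). If P and Q are semi-reduced submodules of N with P ≅ Q and P a direct summand of N, then Q is a direct summand of N (Red-C2 condition). -/
/-- Red-C2 condition for Red-quasi-injective modules. -/
theorem red_C2 (R : Type*) [CommRing R]
    (N : Type*) [AddCommGroup N] [Module R N]
    (hN : ∀ (K : Submodule R N), IsSemiReduced R N K →
      ∀ f : K →ₗ[R] N, ∃ g : N →ₗ[R] N, ∀ x : K, g x = f x)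
    (P Q : Submodule R N) (hP : IsSemiReduced R N P) (hQ : IsSemiReduced R N Q)
    (e : P ≃ₗ[R] Q) (hPsum : ∃ P' : Submodule R N, IsCompl P P') :
    ∃ Q' : Submodule R N, IsCompl Q Q' := by
  obtain ⟨P', hPP'⟩ := hPsum
  -- f : Q → N, the inclusion of e.symm
  obtain ⟨g, hg⟩ := hN Q hQ (P.subtype ∘ₗ (e.symm : Q →ₗ[R] P))
  let π : N →ₗ[R] P := P.projectionOnto P' hPP'
  let h : N →ₗ[R] Q := (e : P →ₗ[R] Q) ∘ₗ π ∘ₗ g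
  refine ⟨LinearMap.ker h, LinearMap.isCompl_of_proj ?_⟩
  intro q
  have h1 : g q = ((e.symm q : P) : N) := hg q
  simp only [h, LinearMap.comp_apply, h1, π,
    Submodule.projectionOnto_apply_left]
  simp
end
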